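/- Let G be an F_k-free graph with bipartition V(G) = X ∪ Y, where the number of missing crossing edges between X and Y is r. Then the matching number of G[X] satisfies ⌊ν(G[X])/k⌋ · |Y| ≤ r; in particular, if |Y| ≥ n/3 then ν(G[X]) ≤ k(1 + 3r/n). -/

import Mathlib

open SimpleGraph

/-- The matching number of `G` restricted to a vertex subset `S`. -/
noncomputable def nuOn {V : Type*} (G : SimpleGraph V) (S : Set V) : ℕ :=
  sSup {n | ∃ M : G.Subgraph, M.IsMatching ∧ M.verts ⊆ S ∧ M.edgeSet.ncard = n}

/-- The matching number `ν(G)`. -/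
noncomputable def nu {V : Type*} (G : SimpleGraph V) : ℕ := nuOn G Set.univ

/-- The friendship graph `F_k`: `k` triangles sharing the common center `none`. -/
def friendshipGraph (k : ℕ) : SimpleGraph (Option (Fin k × Fin 2)) :=
  SimpleGraph.fromRel (fun a b => a = none ∨ b = none ∨ ∃ i, a = some (i, 0) ∧ b = some (i, 1))

/-- `G` contains no copy of the friendship graph `F_k`. -/
def FkFree (k : ℕ) {V : Type*} (G : SimpleGraph V) : Prop :=
  ∀ f : friendshipGraph k →g G, ¬ Function.Injective ⇑f

lemma sym2_out_eq {α : Type*} (e : Sym2 α) : s(e.out.1, e.out.2) = e := by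
  rw [Sym2.mk, Prod.mk.eta, e.out_eq]

lemma matching_unique_nbr {V : Type*} {G : SimpleGraph V} {M : G.Subgraph}
    (hM : M.IsMatching) {v w w' : V} (h1 : M.Adj v w) (h2 : M.Adj v w') : w = w' :=
  (hM (M.edge_vert h1)).unique h1 h2

lemma matching_edge_unique {V : Type*} {G : SimpleGraph V} {M : G.Subgraph}
    (hM : M.IsMatching) {e e' : Sym2 V} (he : e ∈ M.edgeSet) (he' : e' ∈ M.edgeSet)
    {v : V} (hv : v ∈ e) (hv' : v ∈ e') : e = e' := by
  induction e using Sym2.ind with | _ a b =>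
  induction e' using Sym2.ind with | _ c d =>
  rw [Subgraph.mem_edgeSet] at he he'
  rw [Sym2.mem_iff] at hv hv'
  rcases hv with rfl | rfl <;> rcases hv' with rfl | rfl
  · rw [matching_unique_nbr hM he he']
  · rw [matching_unique_nbr hM he he'.symm, Sym2.eq_swap]
  · rw [matching_unique_nbr hM he.symm he', Sym2.eq_swap]
  · rw [matching_unique_nbr hM he.symm he'.symm]

lemma mem_verts_of_mem_edge {V : Type*} {G : SimpleGraph V} {M : G.Subgraph}
    {e : Sym2 V} (he : e ∈ M.edgeSet) {v : V} (hv : v ∈ e) : v ∈ M.verts := by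
  induction e using Sym2.ind with | _ a b =>
  rw [Subgraph.mem_edgeSet] at he
  rcases Sym2.mem_iff.mp hv with rfl | rfl
  · exact M.edge_vert he
  · exact M.edge_vert he.symm

/-- Key step: at most `k-1` matching edges can have both endpoints adjacent to `y ∉ X`. -/
lemma key_card_lt {V : Type*} {k : ℕ} {G : SimpleGraph V} {X Y : Set V}
    (hdisj : Disjoint X Y) (hfree : FkFree k G)
    {M : G.Subgraph} (hM : M.IsMatching) (hMX : M.verts ⊆ X) {y : V} (hy : y ∈ Y)
    (A : Finset (Sym2 V)) (hA : ↑A ⊆ M.edgeSet)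
    (hadjA : ∀ e ∈ A, ∀ x ∈ e, G.Adj x y) : A.card < k := by
  by_contra hcon
  push_neg at hcon
  obtain ⟨t, hts, htc⟩ := Finset.exists_subset_card_eq hcon
  set g : Fin k → Sym2 V := fun i => ((Finset.equivFinOfCardEq htc).symm i : Sym2 V) with hgdef
  have hgA : ∀ i, g i ∈ A := fun i => hts ((Finset.equivFinOfCardEq htc).symm i).2
  have hgE : ∀ i, g i ∈ M.edgeSet := fun i => hA (hgA i)
  have hginj : Function.Injective g := fun i j hij => by
    have := (Finset.equivFinOfCardEq htc).symm.injective (Subtype.ext hij)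
    exact this
  set a : Fin k → V := fun i => (g i).out.1 with hadef
  set b : Fin k → V := fun i => (g i).out.2 with hbdef
  have hmema : ∀ i, a i ∈ g i := fun i => Sym2.out_fst_mem _
  have hmemb : ∀ i, b i ∈ g i := fun i => Sym2.out_snd_mem _
  have hadj : ∀ i, M.Adj (a i) (b i) := fun i =>
    Subgraph.mem_edgeSet.mp (by rw [sym2_out_eq]; exact hgE i)
  have hay : ∀ i, G.Adj (a i) y := fun i => hadjA _ (hgA i) _ (hmema i)
  have hby : ∀ i, G.Adj (b i) y := fun i => hadjA _ (hgA i) _ (hmemb i)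
  have hne : ∀ i, a i ≠ b i := fun i => (M.adj_sub (hadj i)).ne
  have haX : ∀ i, a i ∈ X := fun i => hMX (M.edge_vert (hadj i))
  have hbX : ∀ i, b i ∈ X := fun i => hMX (M.edge_vert (hadj i).symm)
  have hyX : y ∉ X := fun h => Set.disjoint_left.mp hdisj h hy
  -- shared vertex implies same index
  have hsame : ∀ i j : Fin k, ∀ v : V, v ∈ g i → v ∈ g j → i = j := fun i j v hvi hvj =>
    hginj (matching_edge_unique hM (hgE i) (hgE j) hvi hvj)
  have fin2 : ∀ j : Fin 2, j ≠ 0 → j = 1 := by decide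
  set f : Option (Fin k × Fin 2) → V := fun o => match o with
    | none => y
    | some (i, j) => if j = 0 then a i else b i
    with hfdef
  have hf_some : ∀ i j, f (some (i, j)) ∈ g i := by
    intro i j
    show (if j = 0 then a i else b i) ∈ g i
    split
    · exact hmema i
    · exact hmemb i
  have hf_someX : ∀ i j, f (some (i, j)) ∈ X := by
    intro i j
    show (if j = 0 then a i else b i) ∈ X
    split
    · exact haX i
    · exact hbX i
  have hrel : ∀ u v : Option (Fin k × Fin 2),
      (u = none ∨ v = none ∨ ∃ i, u = some (i, 0) ∧ v = some (i, 1)) → u ≠ v →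
      G.Adj (f u) (f v) := by
    rintro u v (rfl | rfl | ⟨i, rfl, rfl⟩) hne'
    · rcases v with _ | ⟨i, j⟩
      · exact absurd rfl hne'
      · show G.Adj y (if j = 0 then a i else b i)
        split
        · exact (hay i).symm
        · exact (hby i).symm
    · rcases u with _ | ⟨i, j⟩
      · exact absurd rfl hne'
      · show G.Adj (if j = 0 then a i else b i) y
        split
        · exact hay i
        · exact hby i
    · show G.Adj (if (0 : Fin 2) = 0 then a i else b i) (if (1 : Fin 2) = 0 then a i else b i)
      rw [if_pos rfl, if_neg (by decide)]
      exact M.adj_sub (hadj i)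
  have hhom : ∀ u v : Option (Fin k × Fin 2),
      (friendshipGraph k).Adj u v → G.Adj (f u) (f v) := by
    intro u v huv
    rw [friendshipGraph, SimpleGraph.fromRel_adj] at huv
    obtain ⟨hne', h | h⟩ := huv
    · exact hrel u v h hne'
    · exact (hrel v u h hne'.symm).symm
  have hinj : Function.Injective f := by
    rintro (_ | ⟨i, j⟩) (_ | ⟨i', j'⟩) huv
    · rfl
    · have h2 : y = f (some (i', j')) := huv
      exact absurd (h2.symm ▸ hf_someX i' j') hyX
    · have h2 : y = f (some (i, j)) := huv.symm
      exact absurd (h2.symm ▸ hf_someX i j) hyX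
    · have hi : i = i' := hsame i i' (f (some (i, j))) (hf_some i j) (huv ▸ hf_some i' j')
      subst hi
      have hj : j = j' := by
        by_contra hjj
        have heq : (if j = 0 then a i else b i) = (if j' = 0 then a i else b i) := huv
        rcases eq_or_ne j 0 with rfl | hj0
        · rw [if_pos rfl, if_neg (Ne.symm hjj)] at heq
          exact hne i heq
        · have hj1 := fin2 j hj0
          subst hj1
          have hj'0 : j' = 0 := by
            rcases eq_or_ne j' 0 with h | h
            · exact h
            · exact absurd (fin2 j' h).symm hjj
          rw [if_neg hj0, if_pos hj'0] at heq
          exact hne i heq.symm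
      rw [hj]
  exact hfree ⟨f, fun {u v} h => hhom u v h⟩ hinj

/-- Matching-number bound inside one side of a bipartition of an `F_k`-free graph:
`⌊ν(G[X])/k⌋·|Y| ≤ r`; in particular if `|Y| ≥ n/3` then `ν(G[X]) ≤ k(1 + 3r/n)`. -/
theorem internal_matching_bound {V : Type*} [Fintype V] (k : ℕ) (hk : 1 ≤ k)
    (G : SimpleGraph V) (X Y : Set V)
    (hpart : X ∪ Y = Set.univ) (hdisj : Disjoint X Y) (hfree : FkFree k G)
    (r : ℕ) (hr : r = Set.ncard {p : V × V | p.1 ∈ X ∧ p.2 ∈ Y ∧ ¬ G.Adj p.1 p.2}) :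
    nuOn G X / k * Y.ncard ≤ r ∧
      ((Fintype.card V : ℝ) ≤ 3 * Y.ncard →
        (nuOn G X : ℝ) ≤ k * (1 + 3 * r / Fintype.card V)) := by
  classical
  -- the matching number is attained
  have hSne : {n | ∃ M : G.Subgraph, M.IsMatching ∧ M.verts ⊆ X ∧ M.edgeSet.ncard = n}.Nonempty :=
    ⟨0, ⊥, fun v hv => absurd hv (by simp), by simp, by simp⟩
  have hbdd : BddAbove {n | ∃ M : G.Subgraph, M.IsMatching ∧ M.verts ⊆ X ∧ M.edgeSet.ncard = n} := by
    refine ⟨Fintype.card (Sym2 V), fun n hn => ?_⟩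
    obtain ⟨M, _, _, rfl⟩ := hn
    calc M.edgeSet.ncard ≤ (Set.univ : Set (Sym2 V)).ncard :=
          Set.ncard_le_ncard (Set.subset_univ _) Set.finite_univ
      _ = Fintype.card (Sym2 V) := by rw [Set.ncard_univ, Nat.card_eq_fintype_card]
  obtain ⟨M, hM, hMX, hMcard⟩ := Nat.sSup_mem hSne hbdd
  have hYfin : Y.Finite := Y.toFinite
  set Yf := hYfin.toFinset with hYf
  have hEfin : M.edgeSet.Finite := Set.toFinite _
  set Ef := hEfin.toFinset with hEf
  set Pset := {p : V × V | p.1 ∈ X ∧ p.2 ∈ Y ∧ ¬ G.Adj p.1 p.2} with hPset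
  have hPfin : Pset.Finite := Set.toFinite _
  set Pf := hPfin.toFinset with hPf
  have hnu : nuOn G X = M.edgeSet.ncard := hMcard.symm
  have hm : Ef.card = nuOn G X := by
    rw [hnu]; exact (Set.ncard_eq_toFinset_card _ hEfin).symm
  have hrP : r = Pf.card := by rw [hr, Set.ncard_eq_toFinset_card _ hPfin]
  have hYcard : Y.ncard = Yf.card := Set.ncard_eq_toFinset_card _ hYfin
  -- per-vertex count of "good" edges
  have hfilt : ∀ y ∈ Yf, Ef.card - (k - 1) ≤ (Ef.filter (fun e => ∃ x ∈ e, ¬ G.Adj x y)).card := by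
    intro y hy
    have hlt : (Ef.filter (fun e => ¬ ∃ x ∈ e, ¬ G.Adj x y)).card < k := by
      refine key_card_lt hdisj hfree hM hMX (hYfin.mem_toFinset.mp hy) _ ?_ ?_
      · intro e he
        simp only [Finset.coe_filter, Set.mem_setOf_eq] at he
        exact hEfin.mem_toFinset.mp he.1
      · intro e he x hx
        have h2 := (Finset.mem_filter.mp he).2
        push_neg at h2
        exact h2 x hx
    have := Finset.card_filter_add_card_filter_not
      (s := Ef) (fun e => ∃ x ∈ e, ¬ G.Adj x y)
    omega
  -- the incidence set
  set Q : Finset (Sym2 V × V) :=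
    Yf.biUnion (fun y => (Ef.filter (fun e => ∃ x ∈ e, ¬ G.Adj x y)).image (fun e => (e, y)))
    with hQ
  have hQmem : ∀ q ∈ Q, q.1 ∈ Ef ∧ q.2 ∈ Yf ∧ ∃ x ∈ q.1, ¬ G.Adj x q.2 := by
    intro q hq
    rw [hQ, Finset.mem_biUnion] at hq
    obtain ⟨y, hy, hq⟩ := hq
    rw [Finset.mem_image] at hq
    obtain ⟨e, he, rfl⟩ := hq
    rw [Finset.mem_filter] at he
    exact ⟨he.1, hy, he.2⟩
  have hQcard : Yf.card * (Ef.card - (k - 1)) ≤ Q.card := by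
    rw [hQ, Finset.card_biUnion]
    · have hsum := Finset.card_nsmul_le_sum Yf
        (fun y => ((Ef.filter (fun e => ∃ x ∈ e, ¬ G.Adj x y)).image (fun e => (e, y))).card)
        (Ef.card - (k - 1)) (fun y hy => by
          rw [Finset.card_image_of_injective _ (fun e e' h => ((Prod.mk.injEq _ _ _ _).mp h).1)]
          exact hfilt y hy)
      simpa [smul_eq_mul] using hsum
    · intro y hy y' hy' hne
      rw [Function.onFun, Finset.disjoint_left]
      intro q hq hq'
      rw [Finset.mem_image] at hq hq'
      obtain ⟨e, _, rfl⟩ := hq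
      obtain ⟨e', _, he'⟩ := hq'
      exact hne ((Prod.mk.injEq _ _ _ _).mp he' |>.2).symm
  -- injection into the missing pairs
  set φ : Sym2 V × V → V × V :=
    fun q => if h : ∃ x ∈ q.1, ¬ G.Adj x q.2 then (h.choose, q.2) else (q.2, q.2) with hφ
  have hφmem : ∀ q ∈ Q, φ q ∈ Pf := by
    intro q hq
    obtain ⟨hqE, hqY, hqx⟩ := hQmem q hq
    rw [hφ]
    simp only [dif_pos hqx]
    obtain ⟨hx1, hx2⟩ := hqx.choose_spec
    refine hPfin.mem_toFinset.mpr ⟨?_, hYfin.mem_toFinset.mp hqY, hx2⟩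
    exact hMX (mem_verts_of_mem_edge (hEfin.mem_toFinset.mp hqE) hx1)
  have hφinj : Set.InjOn φ ↑Q := by
    intro q hq q' hq' heq
    obtain ⟨hqE, _, hqx⟩ := hQmem q hq
    obtain ⟨hqE', _, hqx'⟩ := hQmem q' hq'
    rw [hφ] at heq
    simp only [dif_pos hqx, dif_pos hqx'] at heq
    obtain ⟨h1, h2⟩ := (Prod.mk.injEq _ _ _ _).mp heq
    have he : q.1 = q'.1 := by
      refine matching_edge_unique hM (hEfin.mem_toFinset.mp hqE) (hEfin.mem_toFinset.mp hqE')
        hqx.choose_spec.1 ?_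
      rw [h1]
      exact hqx'.choose_spec.1
    exact Prod.ext he h2
  have hQP : Q.card ≤ Pf.card := Finset.card_le_card_of_injOn φ hφmem hφinj
  have hmain : Yf.card * (Ef.card - (k - 1)) ≤ r := by
    rw [hrP]; exact le_trans hQcard hQP
  -- floor-division bound
  have hdivle : Ef.card / k ≤ Ef.card - (k - 1) := by
    rcases Nat.eq_zero_or_pos (Ef.card / k) with h | h
    · simp [h]
    · obtain ⟨k', rfl⟩ : ∃ k', k = k' + 1 := ⟨k - 1, by omega⟩
      have h1 : Ef.card / (k' + 1) * (k' + 1) ≤ Ef.card := Nat.div_mul_le_self _ _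
      have h3 : k' ≤ Ef.card / (k' + 1) * k' := Nat.le_mul_of_pos_left _ h
      rw [Nat.mul_succ] at h1
      omega
  have part1 : nuOn G X / k * Y.ncard ≤ r := by
    rw [← hm, hYcard]
    calc Ef.card / k * Yf.card ≤ (Ef.card - (k - 1)) * Yf.card :=
          Nat.mul_le_mul_right _ hdivle
      _ = Yf.card * (Ef.card - (k - 1)) := Nat.mul_comm _ _
      _ ≤ r := hmain
  refine ⟨part1, fun hY3 => ?_⟩
  rcases Nat.eq_zero_or_pos Yf.card with h0 | hpos
  · -- then |V| = 0
    have hn0 : Fintype.card V = 0 := by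
      rw [hYcard] at hY3
      have : (Fintype.card V : ℝ) ≤ 0 := by rw [h0] at hY3; simpa using hY3
      exact_mod_cast le_antisymm this (by positivity)
    have hVempty : IsEmpty V := Fintype.card_eq_zero_iff.mp hn0
    have hSym : IsEmpty (Sym2 V) := ⟨fun e => isEmptyElim e.out.1⟩
    have hmm : nuOn G X = 0 := by rw [← hm, Finset.eq_empty_of_isEmpty Ef, Finset.card_empty]
    rw [hmm, hn0]
    push_cast
    rw [div_zero]
    have : (1 : ℝ) ≤ k := by exact_mod_cast hk
    nlinarith
  · have hnY : Yf.card ≤ Fintype.card V := by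
      rw [← hYcard]
      calc Y.ncard ≤ (Set.univ : Set V).ncard := Set.ncard_le_ncard (Set.subset_univ _) Set.finite_univ
        _ = Fintype.card V := by rw [Set.ncard_univ, Nat.card_eq_fintype_card]
    have hnpos : 0 < Fintype.card V := lt_of_lt_of_le hpos hnY
    set mm := Ef.card with hmm
    set n := Fintype.card V with hn
    have key1 : mm / k * Yf.card ≤ r := by
      calc mm / k * Yf.card ≤ (mm - (k - 1)) * Yf.card := Nat.mul_le_mul_right _ hdivle
        _ = Yf.card * (mm - (k - 1)) := Nat.mul_comm _ _
        _ ≤ r := hmain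
    have hYposR : (0 : ℝ) < Yf.card := by exact_mod_cast hpos
    have hnposR : (0 : ℝ) < n := by exact_mod_cast hnpos
    have hq1 : ((mm / k : ℕ) : ℝ) ≤ r / Yf.card := by
      rw [le_div_iff₀ hYposR]
      exact_mod_cast key1
    have hq2 : (r : ℝ) / Yf.card ≤ 3 * r / n := by
      rw [div_le_div_iff₀ hYposR hnposR]
      have hrnn : (0 : ℝ) ≤ r := by positivity
      have h3Y : (n : ℝ) ≤ 3 * Yf.card := by rw [hYcard] at hY3; exact_mod_cast hY3
      nlinarith
    have hq : ((mm / k : ℕ) : ℝ) ≤ 3 * r / n := le_trans hq1 hq2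
    have hdm := Nat.div_add_mod mm k
    have hmlt : mm % k < k := Nat.mod_lt _ (by omega)
    have hmk : (mm : ℝ) ≤ k * ((mm / k : ℕ) : ℝ) + (k - 1) := by
      have : (k : ℝ) * ((mm / k : ℕ) : ℝ) + (mm % k : ℕ) = mm := by exact_mod_cast hdm
      have h2 : ((mm % k : ℕ) : ℝ) ≤ (k : ℝ) - 1 := by
        have : (mm % k : ℕ) + 1 ≤ k := hmlt
        have := (Nat.cast_le (α := ℝ)).mpr this
        push_cast at this
        linarith
      linarith
    rw [← hm]
    have hkR : (0 : ℝ) ≤ k := by positivity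
    have hmul := mul_le_mul_of_nonneg_left hq hkR
    calc (mm : ℝ) ≤ k * ((mm / k : ℕ) : ℝ) + (k - 1) := hmk
      _ ≤ k * (3 * r / n) + (k - 1) := by linarith
      _ ≤ k * (1 + 3 * r / n) := by ring_nf; linarith
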